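/- Fix δ>0. Under P^{(−δ)}, almost surely the map m ↦ X^{−,m} is continuous for locally uniform convergence on its domain: for every m>0, every T < A_∞^{−,m} and every ε>0, there exists η>0 such that for all m' with |m' − m| < η one has sup_{0≤t≤T} |X^{−,m'}_t − X^{−,m}_t| ≤ ε. -/

import Mathlib

open MeasureTheory ProbabilityTheory Set Filter Topology

noncomputable section

namespace PRBM

variable {Ω : Type} [MeasurableSpace Ω]

/-- `B` is a standard one-dimensional Brownian motion started at `0` under `P`:
continuous paths, Gaussian increments with the right variance, and independent
increments. -/
structure IsStdBM (P : Measure Ω) (B : ℝ → Ω → ℝ) : Prop where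
  cont : ∀ ω, Continuous fun t => B t ω
  init : ∀ ω, B 0 ω = 0
  meas : ∀ t, Measurable fun ω => B t ω
  gauss_incr : ∀ s t : ℝ, 0 ≤ s → s ≤ t →
    P.map (fun ω => B t ω - B s ω) = gaussianReal 0 (Real.toNNReal (t - s))
  indep_incr : ∀ (n : ℕ) (t : Fin (n + 1) → ℝ), Monotone t → 0 ≤ t 0 →
    iIndepFun (β := fun _ : Fin n => ℝ)
      (fun i ω => B (t i.succ) ω - B (t i.castSucc) ω) P

/-- `LB` is a continuous version of the local time at level `0` of `B`,
normalized by `LB t = lim_{ε→0+} ε⁻¹ Leb{s ∈ [0,t] : B s ∈ (0,ε]}` a.s. -/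
structure IsLocTime0 (P : Measure Ω) (B : ℝ → Ω → ℝ) (LB : ℝ → Ω → ℝ) : Prop where
  cont : ∀ ω, Continuous fun t => LB t ω
  init : ∀ ω, LB 0 ω = 0
  mono : ∀ ω, Monotone fun t => LB t ω
  meas : ∀ t, Measurable fun ω => LB t ω
  approx : ∀ᵐ ω ∂P, ∀ t : ℝ, 0 ≤ t →
    Tendsto (fun ε : ℝ =>
        (volume {s : ℝ | s ∈ Icc 0 t ∧ B s ω ∈ Ioc 0 ε}).toReal / ε)
      (nhdsWithin 0 (Ioi 0)) (nhds (LB t ω))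

/-- `L` is a jointly continuous version of the local time field of the process `X`:
`L t r` is the local time of `X` at time `t` and level `r`. -/
structure IsLocTime (P : Measure Ω) (X : ℝ → Ω → ℝ) (L : ℝ → ℝ → Ω → ℝ) : Prop where
  cont : ∀ ω, Continuous fun p : ℝ × ℝ => L p.1 p.2 ω
  init : ∀ r ω, L 0 r ω = 0
  mono : ∀ r ω, Monotone fun t => L t r ω
  meas : ∀ t r, Measurable fun ω => L t r ω
  approx : ∀ᵐ ω ∂P, ∀ t : ℝ, 0 ≤ t → ∀ r : ℝ,
    Tendsto (fun ε : ℝ =>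
        (volume {s : ℝ | s ∈ Icc 0 t ∧ X s ω ∈ Ioc r (r + ε)}).toReal / ε)
      (nhdsWithin 0 (Ioi 0)) (nhds (L t r ω))

/-- First hitting time of level `r` by the process `X`. -/
def hit (X : ℝ → Ω → ℝ) (r : ℝ) (ω : Ω) : ℝ := sInf {t : ℝ | 0 ≤ t ∧ X t ω = r}

/-- Last hitting time of level `r` by the process `X`. -/
def lastHit (X : ℝ → Ω → ℝ) (r : ℝ) (ω : Ω) : ℝ := sSup {t : ℝ | 0 ≤ t ∧ X t ω = r}

/-- Right-continuous inverse of the local time of `X` at level `r`: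
`invLT L r x = inf{s ≥ 0 : L s r > x}`. -/
def invLT (L : ℝ → ℝ → Ω → ℝ) (r x : ℝ) (ω : Ω) : ℝ := sInf {s : ℝ | 0 ≤ s ∧ x < L s r ω}

/-- `J(x) = inf{X_s : 0 ≤ s ≤ τ_0(x)}`, the minimum of `X` before the inverse local
time at level `0` at `x`. -/
def Jmin (X : ℝ → Ω → ℝ) (L : ℝ → ℝ → Ω → ℝ) (x : ℝ) (ω : Ω) : ℝ :=
  sInf ((fun s => X s ω) '' Icc 0 (invLT L 0 x ω))

/-- `g_m`, the last zero of `X` before the hitting time of `-m`. -/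
def lastZero (X : ℝ → Ω → ℝ) (m : ℝ) (ω : Ω) : ℝ :=
  sSup {t : ℝ | 0 ≤ t ∧ t ≤ hit X (-m) ω ∧ X t ω = 0}

/-- `I_{g_m} = inf{X_s : 0 ≤ s ≤ g_m}`. -/
def Imin (X : ℝ → Ω → ℝ) (m : ℝ) (ω : Ω) : ℝ :=
  sInf ((fun s => X s ω) '' Icc 0 (lastZero X m ω))

/-- `d_m = inf{t > g_m : X_t = I_{g_m}}`. -/
def dTime (X : ℝ → Ω → ℝ) (m : ℝ) (ω : Ω) : ℝ :=
  sInf {t : ℝ | lastZero X m ω < t ∧ X t ω = Imin X m ω}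

/-- Total local time `L(∞, r)` of `X` at level `r` (supremum over time). -/
def Ltot (L : ℝ → ℝ → Ω → ℝ) (r : ℝ) (ω : Ω) : ℝ := sSup (Set.range fun t => L t r ω)

/-- The space of continuous paths with finite duration, encoded as
(duration, path stopped at the duration). -/
abbrev PathSp : Type := ℝ × (ℝ → ℝ)

/-- The path `f` stopped at time `T`, as an element of `PathSp`. -/
def stopPath (f : ℝ → ℝ) (T : ℝ) : PathSp := (T, fun t => f (min (max t 0) T))

/-- Occupation time of `{f ≤ h}` up to time `u`. -/
def occBelow (f : ℝ → ℝ) (h u : ℝ) : ℝ := (volume {s : ℝ | s ∈ Icc 0 u ∧ f s ≤ h}).toReal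

/-- Occupation time of `{f > h}` up to time `u`. -/
def occAbove (f : ℝ → ℝ) (h u : ℝ) : ℝ := (volume {s : ℝ | s ∈ Icc 0 u ∧ h < f s}).toReal

/-- The time-changed path obtained by removing from `f` its excursions above level `h`. -/
def tcBelow (f : ℝ → ℝ) (h t : ℝ) : ℝ := f (sInf {u : ℝ | 0 ≤ u ∧ t < occBelow f h u})

/-- The time-changed path obtained by removing from `f` its excursions below or at level `h`. -/
def tcAbove (f : ℝ → ℝ) (h t : ℝ) : ℝ := f (sInf {u : ℝ | 0 ≤ u ∧ t < occAbove f h u})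

/-- The path `f`, considered up to time `T`, with its excursions above level `h` removed. -/
def pathBelow (f : ℝ → ℝ) (T h : ℝ) : PathSp :=
  (occBelow f h T, fun t => tcBelow f h (min (max t 0) (occBelow f h T)))

/-- The path `f`, considered on `[0,∞)`, with its excursions above level `h` removed
(duration `A_∞^{-,h}`). -/
def pathBelowInf (f : ℝ → ℝ) (h : ℝ) : PathSp :=
  (sSup (Set.range fun u => occBelow f h u),
   fun t => tcBelow f h (min (max t 0) (sSup (Set.range fun u => occBelow f h u))))

/-- The path `f`, considered up to time `T`, with its excursions below (or at) level `h`
removed. -/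
def pathAbove (f : ℝ → ℝ) (T h : ℝ) : PathSp :=
  (occAbove f h T, fun t => tcAbove f h (min (max t 0) (occAbove f h T)))

/-- The beta(a,b) distribution on `(0,1)`. -/
def betaMeasure' (a b : ℝ) : Measure ℝ :=
  volume.withDensity (Set.indicator (Set.Ioo 0 1) fun x =>
    ENNReal.ofReal (Real.Gamma (a + b) / (Real.Gamma a * Real.Gamma b) *
      x ^ (a - 1) * (1 - x) ^ (b - 1)))

/-- `W` is a standard three-dimensional Brownian motion started at the origin. -/
structure IsBM3 (P : Measure Ω) (W : ℝ → Ω → Fin 3 → ℝ) : Prop where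
  coord : ∀ i : Fin 3, IsStdBM P fun t ω => W t ω i
  indep : iIndepFun (β := fun _ : Fin 3 => ℝ → ℝ)
    (fun i ω t => W t ω i) P

/-- The three-dimensional Bessel process built from the 3D Brownian motion `W`:
the Euclidean norm of `W`. -/
def bessel3 (W : ℝ → Ω → Fin 3 → ℝ) (t : ℝ) (ω : Ω) : ℝ :=
  Real.sqrt (∑ i, W t ω i ^ 2)

end PRBM

open PRBM


namespace PRBM

variable {Ω : Type} [MeasurableSpace Ω]

/-- Auxiliary: right-continuous inverse of `u ↦ occBelow f m u`. -/
def alphaT (f : ℝ → ℝ) (m t : ℝ) : ℝ := sInf {u : ℝ | 0 ≤ u ∧ t < occBelow f m u}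

lemma tcBelow_eq_alphaT (f : ℝ → ℝ) (m t : ℝ) : tcBelow f m t = f (alphaT f m t) := rfl

namespace Det

variable {f : ℝ → ℝ}

lemma vol_occ_ne_top (h u : ℝ) : volume {s : ℝ | s ∈ Icc 0 u ∧ f s ≤ h} ≠ ⊤ := by
  refine ne_top_of_le_ne_top ?_ (measure_mono (fun s hs => hs.1))
  simp [Real.volume_Icc]

lemma occ_nonneg (h u : ℝ) : 0 ≤ occBelow f h u := ENNReal.toReal_nonneg

lemma occ_mono_u (h : ℝ) {u₁ u₂ : ℝ} (hu : u₁ ≤ u₂) : occBelow f h u₁ ≤ occBelow f h u₂ := by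
  refine ENNReal.toReal_mono (vol_occ_ne_top h u₂) (measure_mono ?_)
  exact fun s hs => ⟨⟨hs.1.1, hs.1.2.trans hu⟩, hs.2⟩

lemma occ_mono_h {h₁ h₂ : ℝ} (u : ℝ) (hh : h₁ ≤ h₂) : occBelow f h₁ u ≤ occBelow f h₂ u := by
  refine ENNReal.toReal_mono (vol_occ_ne_top h₂ u) (measure_mono ?_)
  exact fun s hs => ⟨hs.1, hs.2.trans hh⟩

lemma occ_of_nonpos {h u : ℝ} (hu : u ≤ 0) : occBelow f h u = 0 := by
  have : volume {s : ℝ | s ∈ Icc 0 u ∧ f s ≤ h} = 0 := by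
    refine measure_mono_null (fun s hs => hs.1) ?_
    simp [Real.volume_Icc, hu]
  unfold occBelow
  rw [this]
  simp

lemma occ_le {h u : ℝ} (hu : 0 ≤ u) : occBelow f h u ≤ u := by
  have h1 : volume {s : ℝ | s ∈ Icc 0 u ∧ f s ≤ h} ≤ ENNReal.ofReal u := by
    refine le_trans (measure_mono (fun s hs => hs.1)) ?_
    simp [Real.volume_Icc]
  calc occBelow f h u ≤ (ENNReal.ofReal u).toReal :=
        ENNReal.toReal_mono ENNReal.ofReal_ne_top h1
    _ = u := ENNReal.toReal_ofReal hu

lemma occ_add (hf : Continuous f) (h : ℝ) {u₁ u₂ : ℝ} (h0 : 0 ≤ u₁) (h12 : u₁ ≤ u₂) :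
    occBelow f h u₂ = occBelow f h u₁ + (volume {s : ℝ | s ∈ Ioc u₁ u₂ ∧ f s ≤ h}).toReal := by
  have hmeas : MeasurableSet {s : ℝ | s ∈ Ioc u₁ u₂ ∧ f s ≤ h} := by
    have : {s : ℝ | s ∈ Ioc u₁ u₂ ∧ f s ≤ h} = Ioc u₁ u₂ ∩ f ⁻¹' (Iic h) := rfl
    rw [this]
    exact measurableSet_Ioc.inter (hf.measurable measurableSet_Iic)
  have hset : {s : ℝ | s ∈ Icc 0 u₂ ∧ f s ≤ h}
      = {s : ℝ | s ∈ Icc 0 u₁ ∧ f s ≤ h} ∪ {s : ℝ | s ∈ Ioc u₁ u₂ ∧ f s ≤ h} := by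
    ext s
    simp only [mem_setOf_eq, mem_union, mem_Icc, mem_Ioc]
    constructor
    · rintro ⟨⟨hs0, hs2⟩, hfs⟩
      rcases le_or_gt s u₁ with hs | hs
      · exact Or.inl ⟨⟨hs0, hs⟩, hfs⟩
      · exact Or.inr ⟨⟨hs, hs2⟩, hfs⟩
    · rintro (⟨⟨hs0, hs1⟩, hfs⟩ | ⟨⟨hs1, hs2⟩, hfs⟩)
      · exact ⟨⟨hs0, hs1.trans h12⟩, hfs⟩
      · exact ⟨⟨h0.trans hs1.le, hs2⟩, hfs⟩
  have hdisj : Disjoint {s : ℝ | s ∈ Icc 0 u₁ ∧ f s ≤ h} {s : ℝ | s ∈ Ioc u₁ u₂ ∧ f s ≤ h} := by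
    rw [Set.disjoint_left]
    rintro s ⟨⟨_, hs1⟩, _⟩ ⟨⟨hs2, _⟩, _⟩
    exact absurd hs1 (not_le.2 hs2)
  have hvol : volume {s : ℝ | s ∈ Ioc u₁ u₂ ∧ f s ≤ h} ≠ ⊤ := by
    refine ne_top_of_le_ne_top ?_ (measure_mono (fun s hs => hs.1))
    simp [Real.volume_Ioc]
  unfold occBelow
  rw [hset, measure_union hdisj hmeas, ENNReal.toReal_add (vol_occ_ne_top h u₁) hvol]

lemma occ_le_add (hf : Continuous f) (h : ℝ) {u₁ u₂ : ℝ} (h0 : 0 ≤ u₁) (h12 : u₁ ≤ u₂) :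
    occBelow f h u₂ ≤ occBelow f h u₁ + (u₂ - u₁) := by
  rw [occ_add hf h h0 h12]
  gcongr
  have h1 : volume {s : ℝ | s ∈ Ioc u₁ u₂ ∧ f s ≤ h} ≤ ENNReal.ofReal (u₂ - u₁) := by
    refine le_trans (measure_mono (fun s hs => hs.1)) ?_
    simp [Real.volume_Ioc]
  calc (volume {s : ℝ | s ∈ Ioc u₁ u₂ ∧ f s ≤ h}).toReal
      ≤ (ENNReal.ofReal (u₂ - u₁)).toReal := ENNReal.toReal_mono ENNReal.ofReal_ne_top h1
    _ = u₂ - u₁ := ENNReal.toReal_ofReal (by linarith)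

lemma occ_diff_le (hf : Continuous f) {m₁ m₂ u u0 : ℝ} (hmm : m₁ ≤ m₂) (h0u : 0 ≤ u)
    (huu0 : u ≤ u0) :
    occBelow f m₂ u ≤ occBelow f m₁ u +
      (volume {s : ℝ | s ∈ Icc 0 u0 ∧ m₁ < f s ∧ f s ≤ m₂}).toReal := by
  have hsub : {s : ℝ | s ∈ Icc 0 u ∧ f s ≤ m₂} ⊆
      {s : ℝ | s ∈ Icc 0 u ∧ f s ≤ m₁} ∪ {s : ℝ | s ∈ Icc 0 u0 ∧ m₁ < f s ∧ f s ≤ m₂} := by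
    intro s hs
    rcases le_or_gt (f s) m₁ with hc | hc
    · exact Or.inl ⟨hs.1, hc⟩
    · exact Or.inr ⟨⟨hs.1.1, hs.1.2.trans huu0⟩, hc, hs.2⟩
  have hfin : volume {s : ℝ | s ∈ Icc 0 u0 ∧ m₁ < f s ∧ f s ≤ m₂} ≠ ⊤ := by
    refine ne_top_of_le_ne_top ?_ (measure_mono (fun s hs => hs.1))
    simp [Real.volume_Icc]
  have := (measure_mono hsub).trans (measure_union_le (μ := volume)
    {s : ℝ | s ∈ Icc 0 u ∧ f s ≤ m₁} {s : ℝ | s ∈ Icc 0 u0 ∧ m₁ < f s ∧ f s ≤ m₂})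
  calc occBelow f m₂ u
      ≤ (volume {s : ℝ | s ∈ Icc 0 u ∧ f s ≤ m₁}
          + volume {s : ℝ | s ∈ Icc 0 u0 ∧ m₁ < f s ∧ f s ≤ m₂}).toReal := by
        refine ENNReal.toReal_mono ?_ this
        exact ENNReal.add_ne_top.2 ⟨vol_occ_ne_top m₁ u, hfin⟩
    _ = _ := ENNReal.toReal_add (vol_occ_ne_top m₁ u) hfin

section Alpha

variable {m t u0 : ℝ}

lemma U_bdd : BddBelow {u : ℝ | 0 ≤ u ∧ t < occBelow f m u} := ⟨0, fun u hu => hu.1⟩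

lemma alpha_nonneg (hu0 : 0 ≤ u0) (htu : t < occBelow f m u0) : 0 ≤ alphaT f m t :=
  le_csInf ⟨u0, hu0, htu⟩ (fun u hu => hu.1)

lemma alpha_le (hu : 0 ≤ u0) (htu : t < occBelow f m u0) : alphaT f m t ≤ u0 :=
  csInf_le U_bdd ⟨hu, htu⟩

lemma lt_occ_of_alpha_lt (hu0 : 0 ≤ u0) (htu : t < occBelow f m u0) {u : ℝ}
    (hu : alphaT f m t < u) : t < occBelow f m u := by
  obtain ⟨w, hw, hwu⟩ := exists_lt_of_csInf_lt
    (s := {u : ℝ | 0 ≤ u ∧ t < occBelow f m u}) ⟨u0, hu0, htu⟩ hu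
  exact hw.2.trans_le (occ_mono_u m hwu.le)

lemma occ_alpha (hf : Continuous f) (hu0 : 0 ≤ u0) (ht0 : 0 ≤ t)
    (htu : t < occBelow f m u0) : occBelow f m (alphaT f m t) = t := by
  have hα0 : 0 ≤ alphaT f m t := alpha_nonneg hu0 htu
  refine le_antisymm ?_ ?_
  · by_contra hc
    push_neg at hc
    rcases eq_or_lt_of_le hα0 with h0 | h0
    · have h00 : occBelow f m (alphaT f m t) = 0 := by
        rw [← h0]; exact occ_of_nonpos le_rfl
      rw [h00] at hc; linarith
    · set d : ℝ := min (alphaT f m t) (occBelow f m (alphaT f m t) - t) / 2 with hd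
      have hd0 : 0 < d := by
        apply div_pos _ two_pos
        exact lt_min h0 (by linarith)
      have hd1 : d ≤ alphaT f m t / 2 := by
        have := min_le_left (alphaT f m t) (occBelow f m (alphaT f m t) - t)
        linarith
      have hd2 : d ≤ (occBelow f m (alphaT f m t) - t) / 2 := by
        have := min_le_right (alphaT f m t) (occBelow f m (alphaT f m t) - t)
        linarith
      have h1 : 0 ≤ alphaT f m t - d := by linarith
      have h2 := occ_le_add hf m h1 (by linarith : alphaT f m t - d ≤ alphaT f m t)
      have h3 : t < occBelow f m (alphaT f m t - d) := by
        have : alphaT f m t - (alphaT f m t - d) = d := by ring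
        nlinarith [hd2]
      have : alphaT f m t ≤ alphaT f m t - d := csInf_le U_bdd ⟨h1, h3⟩
      linarith
  · refine le_of_forall_pos_le_add (fun h hpos => ?_)
    have h1 : t < occBelow f m (alphaT f m t + h) :=
      lt_occ_of_alpha_lt hu0 htu (by linarith)
    have h2 := occ_le_add hf m hα0 (by linarith : alphaT f m t ≤ alphaT f m t + h)
    linarith

lemma f_alpha_le (hf : Continuous f) (hu0 : 0 ≤ u0) (ht0 : 0 ≤ t)
    (htu : t < occBelow f m u0) : f (alphaT f m t) ≤ m := by
  by_contra hc
  push_neg at hc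
  obtain ⟨δ, hδ, hδp⟩ := Metric.continuousAt_iff.mp hf.continuousAt (f (alphaT f m t) - m)
    (by linarith)
  have hgt : ∀ s : ℝ, |s - alphaT f m t| < δ → m < f s := by
    intro s hs
    have := hδp (x := s) (by rwa [Real.dist_eq])
    rw [Real.dist_eq] at this
    have := abs_lt.1 this
    linarith [this.1]
  have hα0 : 0 ≤ alphaT f m t := alpha_nonneg hu0 htu
  have hempty : {s : ℝ | s ∈ Ioc (alphaT f m t) (alphaT f m t + δ/2) ∧ f s ≤ m} = ∅ := by
    ext s
    simp only [mem_setOf_eq, mem_Ioc, mem_empty_iff_false, iff_false, not_and, and_imp]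
    intro h1 h2 h3
    have : |s - alphaT f m t| < δ := by
      rw [abs_lt]; constructor <;> linarith
    exact absurd h3 (not_le.2 (hgt s this))
  have hkey := occ_add hf m hα0 (by linarith : alphaT f m t ≤ alphaT f m t + δ/2)
  rw [hempty] at hkey
  simp at hkey
  have := lt_occ_of_alpha_lt hu0 htu (by linarith : alphaT f m t < alphaT f m t + δ/2)
  rw [hkey] at this
  have := occ_alpha hf hu0 ht0 htu
  linarith

lemma alpha_anti_m {m₁ m₂ : ℝ} (hmm : m₁ ≤ m₂) (hu0 : 0 ≤ u0)
    (htu : t < occBelow f m₁ u0) : alphaT f m₂ t ≤ alphaT f m₁ t := by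
  refine csInf_le_csInf ⟨0, fun u hu => hu.1⟩ ⟨u0, hu0, htu⟩ ?_
  intro u hu
  exact ⟨hu.1, hu.2.trans_le (occ_mono_h u hmm)⟩

lemma ge_on_flat (hf : Continuous f) {u d : ℝ} (h0u : 0 ≤ u) (hud : u ≤ d)
    (hflat : occBelow f m u = occBelow f m d) : ∀ w ∈ Ioo u d, m ≤ f w := by
  intro w hw
  by_contra hc
  push_neg at hc
  obtain ⟨δ, hδ, hδp⟩ := Metric.continuousAt_iff.mp hf.continuousAt (m - f w) (by linarith)
  have hlt : ∀ s : ℝ, |s - w| < δ → f s < m := by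
    intro s hs
    have := hδp (x := s) (by rwa [Real.dist_eq])
    rw [Real.dist_eq] at this
    have := abs_lt.1 this
    linarith [this.2]
  set w₁ : ℝ := max u (w - δ/2) with hw₁
  set w₂ : ℝ := min d (w + δ/2) with hw₂
  have hw₁w : w₁ < w := max_lt hw.1 (by linarith)
  have hww₂ : w < w₂ := lt_min hw.2 (by linarith)
  have hw₁0 : 0 ≤ w₁ := le_trans h0u (le_max_left _ _)
  have hall : {s : ℝ | s ∈ Ioc w₁ w₂ ∧ f s ≤ m} = Ioc w₁ w₂ := by
    ext s
    simp only [mem_setOf_eq, and_iff_left_iff_imp]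
    intro hs
    refine le_of_lt (hlt s ?_)
    rw [abs_lt]
    constructor
    · have : w - δ/2 ≤ w₁ := le_max_right _ _
      have := hs.1
      linarith
    · have : w₂ ≤ w + δ/2 := min_le_right _ _
      have := hs.2
      linarith
  have hkey := occ_add hf m hw₁0 (le_of_lt (hw₁w.trans hww₂))
  rw [hall, Real.volume_Ioc, ENNReal.toReal_ofReal (by linarith)] at hkey
  have h1 : occBelow f m w₂ ≤ occBelow f m d := occ_mono_u m (min_le_left _ _)
  have h2 : occBelow f m u ≤ occBelow f m w₁ := occ_mono_u m (le_max_left _ _)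
  rw [hflat] at h2
  linarith

lemma endpoints_ge (hf : Continuous f) {u d : ℝ} (h0u : 0 ≤ u) (hud : u < d)
    (hflat : occBelow f m u = occBelow f m d) : m ≤ f u ∧ m ≤ f d := by
  have hsub : Ioo u d ⊆ f ⁻¹' (Ici m) := fun w hw => ge_on_flat hf h0u hud.le hflat w hw
  have hcl : Icc u d ⊆ f ⁻¹' (Ici m) := by
    rw [← closure_Ioo hud.ne]
    exact closure_minimal hsub (isClosed_Ici.preimage hf)
  exact ⟨hcl ⟨le_rfl, hud.le⟩, hcl ⟨hud.le, le_rfl⟩⟩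

lemma key_identity (hf : Continuous f) {u : ℝ} (h0u : 0 ≤ u) (hfu : f u ≤ m)
    (hu0 : 0 ≤ u0) (hlt : occBelow f m u < occBelow f m u0) :
    f (alphaT f m (occBelow f m u)) = f u := by
  set t := occBelow f m u with htdef
  have ht0 : 0 ≤ t := occ_nonneg m u
  have hud : u ≤ alphaT f m t := by
    refine le_csInf ⟨u0, hu0, hlt⟩ (fun v hv => ?_)
    by_contra hvc
    push_neg at hvc
    exact absurd (hv.2.trans_le (occ_mono_u m hvc.le)) (lt_irrefl t)
  have hoccd : occBelow f m (alphaT f m t) = t := occ_alpha hf hu0 ht0 hlt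
  rcases eq_or_lt_of_le hud with he | hlt2
  · rw [← he]
  · have hend := endpoints_ge hf h0u hlt2 (by rw [hoccd])
    have hfd : f (alphaT f m t) ≤ m := f_alpha_le hf hu0 ht0 hlt
    rw [le_antisymm hfd hend.2, le_antisymm hfu hend.1]

lemma alpha_mono_t (hu0 : 0 ≤ u0) {t₁ t₂ : ℝ} (ht : t₁ ≤ t₂)
    (htu : t₂ < occBelow f m u0) : alphaT f m t₁ ≤ alphaT f m t₂ := by
  refine csInf_le_csInf U_bdd ⟨u0, hu0, htu⟩ (fun u hu => ⟨hu.1, ht.trans_lt hu.2⟩)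

/-- Right-continuity estimate for `g = f ∘ alphaT f m`. -/
lemma g_right (hf : Continuous f) (hu0 : 0 ≤ u0) {s₀ : ℝ} (hs₀ : 0 ≤ s₀)
    (hs₀S : s₀ < occBelow f m u0) {ε : ℝ} (hε : 0 < ε) :
    ∃ δ > 0, ∀ s : ℝ, s₀ ≤ s → s < s₀ + δ →
      |f (alphaT f m s) - f (alphaT f m s₀)| < ε := by
  set α₀ := alphaT f m s₀ with hα₀
  obtain ⟨δc, hδc, hδcp⟩ := Metric.continuousAt_iff.mp hf.continuousAt ε hε
  set ρ : ℝ := δc / 2 with hρ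
  have hρ0 : 0 < ρ := by linarith
  have hocc : s₀ < occBelow f m (α₀ + ρ) :=
    lt_occ_of_alpha_lt hu0 hs₀S (by linarith)
  refine ⟨occBelow f m (α₀ + ρ) - s₀, by linarith, fun s hs₀s hss => ?_⟩
  have h0α₀ : 0 ≤ α₀ := alpha_nonneg hu0 hs₀S
  have hαs1 : α₀ ≤ alphaT f m s := by
    refine csInf_le_csInf U_bdd ⟨α₀ + ρ, by linarith, by linarith⟩ ?_
    exact fun u hu => ⟨hu.1, hs₀s.trans_lt hu.2⟩
  have hαs2 : alphaT f m s ≤ α₀ + ρ := csInf_le U_bdd ⟨by linarith, by linarith⟩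
  have hdist : dist (alphaT f m s) α₀ < δc := by
    rw [Real.dist_eq, abs_lt]
    constructor <;> [linarith; linarith]
  have := hδcp hdist
  rwa [Real.dist_eq] at this

/-- Left-continuity estimate for `g = f ∘ alphaT f m`. -/
lemma g_left (hf : Continuous f) (hu0 : 0 ≤ u0) {s₀ : ℝ} (hs₀ : 0 < s₀)
    (hs₀S : s₀ < occBelow f m u0) {ε : ℝ} (hε : 0 < ε) :
    ∃ δ > 0, ∀ s : ℝ, 0 ≤ s → s < s₀ → s₀ - δ < s →
      |f (alphaT f m s) - f (alphaT f m s₀)| < ε := by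
  set α₀ := alphaT f m s₀ with hα₀
  set V : Set ℝ := {u : ℝ | 0 ≤ u ∧ s₀ ≤ occBelow f m u} with hV
  have hVne : V.Nonempty := ⟨u0, hu0, hs₀S.le⟩
  have hVbdd : BddBelow V := ⟨0, fun u hu => hu.1⟩
  set c₀ := sInf V with hc₀
  have hc₀0 : 0 ≤ c₀ := le_csInf hVne (fun u hu => hu.1)
  have hocc_ge : s₀ ≤ occBelow f m c₀ := by
    refine le_of_forall_pos_le_add (fun h hpos => ?_)
    obtain ⟨v, hv, hvc⟩ := exists_lt_of_csInf_lt hVne (lt_add_of_pos_right c₀ hpos)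
    have h2 := occ_le_add hf m hc₀0 (by linarith : c₀ ≤ c₀ + h)
    have h3 : occBelow f m v ≤ occBelow f m (c₀ + h) := occ_mono_u m (by linarith)
    linarith [hv.2]
  have hc₀pos : 0 < c₀ := by
    rcases eq_or_lt_of_le hc₀0 with h0 | h0
    · exfalso
      have : occBelow f m c₀ = 0 := by rw [← h0]; exact occ_of_nonpos le_rfl
      linarith
    · exact h0
  have hocc_le : occBelow f m c₀ ≤ s₀ := by
    by_contra hcon
    push_neg at hcon
    set h : ℝ := min c₀ (occBelow f m c₀ - s₀) / 2 with hh
    have hh0 : 0 < h := by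
      apply div_pos _ two_pos
      exact lt_min hc₀pos (by linarith)
    have hh1 : h ≤ c₀ / 2 := by
      have := min_le_left c₀ (occBelow f m c₀ - s₀); linarith
    have hh2 : h ≤ (occBelow f m c₀ - s₀) / 2 := by
      have := min_le_right c₀ (occBelow f m c₀ - s₀); linarith
    have h1 : 0 ≤ c₀ - h := by linarith
    have h2 := occ_le_add hf m h1 (by linarith : c₀ - h ≤ c₀)
    have h3 : s₀ ≤ occBelow f m (c₀ - h) := by linarith
    have : c₀ ≤ c₀ - h := csInf_le hVbdd ⟨h1, h3⟩
    linarith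
  have hocc_eq : occBelow f m c₀ = s₀ := le_antisymm hocc_le hocc_ge
  have hα₀occ : occBelow f m α₀ = s₀ := occ_alpha hf hu0 hs₀.le hs₀S
  have hc₀α : c₀ ≤ α₀ := csInf_le hVbdd ⟨alpha_nonneg hu0 hs₀S, le_of_eq hα₀occ.symm⟩
  have hfc₀ : f c₀ ≤ m := by
    by_contra hcon
    push_neg at hcon
    obtain ⟨δc, hδc, hδcp⟩ := Metric.continuousAt_iff.mp (hf.continuousAt (x := c₀))
      (f c₀ - m) (by linarith)
    have hgt : ∀ s : ℝ, |s - c₀| < δc → m < f s := by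
      intro s hs
      have := hδcp (x := s) (by rwa [Real.dist_eq])
      rw [Real.dist_eq] at this
      have := abs_lt.1 this
      linarith [this.1]
    set h : ℝ := min (δc / 2) (c₀ / 2) with hh
    have hh0 : 0 < h := lt_min (by linarith) (by linarith)
    have hh1 : h ≤ δc / 2 := min_le_left _ _
    have hh2 : h ≤ c₀ / 2 := min_le_right _ _
    have h1 : 0 ≤ c₀ - h := by linarith
    have hempty : {s : ℝ | s ∈ Ioc (c₀ - h) c₀ ∧ f s ≤ m} = ∅ := by
      ext s
      simp only [mem_setOf_eq, mem_Ioc, mem_empty_iff_false, iff_false, not_and, and_imp]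
      intro ha hb hc
      have : |s - c₀| < δc := by rw [abs_lt]; constructor <;> linarith
      exact absurd hc (not_le.2 (hgt s this))
    have hkey := occ_add hf m h1 (by linarith : c₀ - h ≤ c₀)
    rw [hempty] at hkey
    simp at hkey
    have : s₀ ≤ occBelow f m (c₀ - h) := by rw [← hkey, hocc_eq]
    have : c₀ ≤ c₀ - h := csInf_le hVbdd ⟨h1, this⟩
    linarith
  have hgs₀ : f α₀ = f c₀ := by
    rcases eq_or_lt_of_le hc₀α with he | hlt2
    · rw [he]
    · have hend := endpoints_ge hf hc₀0 hlt2 (by rw [hocc_eq, hα₀occ])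
      have hfα : f α₀ ≤ m := f_alpha_le hf hu0 hs₀.le hs₀S
      rw [le_antisymm hfα hend.2, le_antisymm hfc₀ hend.1]
  obtain ⟨δc, hδc, hδcp⟩ := Metric.continuousAt_iff.mp (hf.continuousAt (x := c₀)) ε hε
  set ρ : ℝ := min (δc / 2) c₀ with hρ
  have hρ0 : 0 < ρ := lt_min (by linarith) hc₀pos
  have hρδ : ρ < δc := lt_of_le_of_lt (min_le_left _ _) (by linarith)
  have hρc : ρ ≤ c₀ := min_le_right _ _
  have hstrict : occBelow f m (c₀ - ρ) < s₀ := by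
    rcases lt_or_ge (occBelow f m (c₀ - ρ)) s₀ with hc | hc
    · exact hc
    · exfalso
      have : c₀ ≤ c₀ - ρ := csInf_le hVbdd ⟨by linarith, hc⟩
      linarith
  refine ⟨s₀ - occBelow f m (c₀ - ρ), by linarith, fun s hs0 hss₀ hsgt => ?_⟩
  have hsu : s < occBelow f m u0 := hss₀.trans hs₀S
  have hαs_occ : occBelow f m (alphaT f m s) = s := occ_alpha hf hu0 hs0 hsu
  have h1 : alphaT f m s < c₀ := by
    by_contra hcon
    push_neg at hcon
    have : occBelow f m c₀ ≤ occBelow f m (alphaT f m s) := occ_mono_u m hcon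
    rw [hαs_occ, hocc_eq] at this
    linarith
  have h2 : c₀ - ρ < alphaT f m s := by
    by_contra hcon
    push_neg at hcon
    have : occBelow f m (alphaT f m s) ≤ occBelow f m (c₀ - ρ) := occ_mono_u m hcon
    rw [hαs_occ] at this
    linarith
  have hdist : dist (alphaT f m s) c₀ < δc := by
    rw [Real.dist_eq, abs_lt]
    constructor <;> [linarith; linarith]
  have := hδcp hdist
  rw [Real.dist_eq] at this
  rw [hgs₀]
  exact this

/-- Uniform continuity of `g = f ∘ alphaT f m` on `[0, S]` when `S < occBelow f m u0`. -/
lemma g_uniform (hf : Continuous f) (hu0 : 0 ≤ u0) {S : ℝ} (hS0 : 0 ≤ S)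
    (hSlt : S < occBelow f m u0) {ε : ℝ} (hε : 0 < ε) :
    ∃ κ > 0, ∀ s t : ℝ, s ∈ Icc 0 S → t ∈ Icc 0 S → |s - t| ≤ κ →
      |f (alphaT f m s) - f (alphaT f m t)| ≤ ε := by
  have hcont : ContinuousOn (fun s => f (alphaT f m s)) (Icc 0 S) := by
    intro s₀ hs₀
    rw [Metric.continuousWithinAt_iff]
    intro ε' hε'
    have hs₀lt : s₀ < occBelow f m u0 := lt_of_le_of_lt hs₀.2 hSlt
    obtain ⟨δr, hδr, hright⟩ := g_right hf hu0 hs₀.1 hs₀lt hε'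
    rcases eq_or_lt_of_le hs₀.1 with h0 | h0
    · refine ⟨δr, hδr, fun {x} hx hdx => ?_⟩
      have hx0 : s₀ ≤ x := h0 ▸ hx.1
      rw [Real.dist_eq] at hdx ⊢
      have : x < s₀ + δr := by
        have := abs_lt.1 hdx; linarith [this.2]
      exact hright x hx0 this
    · obtain ⟨δl, hδl, hleft⟩ := g_left hf hu0 h0 hs₀lt hε'
      refine ⟨min δr δl, lt_min hδr hδl, fun {x} hx hdx => ?_⟩
      rw [Real.dist_eq] at hdx ⊢
      have habs := abs_lt.1 hdx
      rcases le_or_gt s₀ x with hc | hc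
      · refine hright x hc ?_
        have := min_le_left δr δl; linarith [habs.2]
      · refine hleft x hx.1 hc ?_
        have := min_le_right δr δl; linarith [habs.1]
  have huc := isCompact_Icc.uniformContinuousOn_of_continuous hcont
  rw [Metric.uniformContinuousOn_iff] at huc
  obtain ⟨δ, hδ, hp⟩ := huc ε hε
  refine ⟨δ / 2, by linarith, fun s t hs ht hst => ?_⟩
  have := hp s hs t ht (by rw [Real.dist_eq]; linarith)
  rw [Real.dist_eq] at this
  linarith

/-- Choice of `η` making the occupation of the strip `(m₁, m₂]` small. -/
lemma kappa_small (hf : Continuous f) {m u0 : ℝ}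
    (hm0 : volume {s : ℝ | s ∈ Icc 0 u0 ∧ f s = m} = 0) {κ : ℝ} (hκ : 0 < κ) :
    ∃ η > 0, ∀ m₁ m₂ : ℝ, m - η < m₁ → m₁ ≤ m → m ≤ m₂ → m₂ < m + η →
      (volume {s : ℝ | s ∈ Icc 0 u0 ∧ m₁ < f s ∧ f s ≤ m₂}).toReal ≤ κ := by
  set E : ℕ → Set ℝ := fun n => {s : ℝ | s ∈ Icc 0 u0 ∧ m - 1/(n+1) < f s ∧ f s ≤ m} with hE
  set F : ℕ → Set ℝ := fun n => {s : ℝ | s ∈ Icc 0 u0 ∧ m < f s ∧ f s ≤ m + 1/(n+1)} with hF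
  have hmeasE : ∀ n, MeasurableSet (E n) := by
    intro n
    have : E n = Icc 0 u0 ∩ (f ⁻¹' (Ioi (m - 1/(n+1))) ∩ f ⁻¹' (Iic m)) := by
      ext s; simp only [hE, mem_setOf_eq, mem_inter_iff, mem_preimage, mem_Ioi, mem_Iic]
    rw [this]
    exact measurableSet_Icc.inter ((hf.measurable measurableSet_Ioi).inter
      (hf.measurable measurableSet_Iic))
  have hmeasF : ∀ n, MeasurableSet (F n) := by
    intro n
    have : F n = Icc 0 u0 ∩ (f ⁻¹' (Ioi m) ∩ f ⁻¹' (Iic (m + 1/(n+1)))) := by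
      ext s; simp only [hF, mem_setOf_eq, mem_inter_iff, mem_preimage, mem_Ioi, mem_Iic]
    rw [this]
    exact measurableSet_Icc.inter ((hf.measurable measurableSet_Ioi).inter
      (hf.measurable measurableSet_Iic))
  have hfinite : ∀ (A : Set ℝ), A ⊆ Icc 0 u0 → volume A ≠ ⊤ := by
    intro A hA
    refine ne_top_of_le_ne_top ?_ (measure_mono hA)
    simp [Real.volume_Icc]
  have hinv : ∀ (x : ℝ), 0 < x → ∃ n : ℕ, 1/((n : ℝ)+1) < x := by
    intro x hx
    obtain ⟨n, hn⟩ := exists_nat_one_div_lt hx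
    exact ⟨n, hn⟩
  have hantE : Antitone E := by
    intro n n' hnn s hs
    refine ⟨hs.1, lt_of_le_of_lt ?_ hs.2.1, hs.2.2⟩
    have h1 : (n:ℝ) + 1 ≤ (n':ℝ) + 1 := by exact_mod_cast Nat.succ_le_succ hnn
    have : 1/((n':ℝ)+1) ≤ 1/((n:ℝ)+1) := by
      apply one_div_le_one_div_of_le (by positivity) h1
    linarith
  have hantF : Antitone F := by
    intro n n' hnn s hs
    refine ⟨hs.1, hs.2.1, hs.2.2.trans ?_⟩
    have h1 : (n:ℝ) + 1 ≤ (n':ℝ) + 1 := by exact_mod_cast Nat.succ_le_succ hnn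
    have : 1/((n':ℝ)+1) ≤ 1/((n:ℝ)+1) := by
      apply one_div_le_one_div_of_le (by positivity) h1
    linarith
  have hIE : (⋂ n, E n) = {s : ℝ | s ∈ Icc 0 u0 ∧ f s = m} := by
    ext s
    simp only [mem_iInter, hE, mem_setOf_eq]
    constructor
    · intro hsy
      have h0 := hsy 0
      refine ⟨h0.1, le_antisymm h0.2.2 ?_⟩
      by_contra hcon
      push_neg at hcon
      obtain ⟨n, hn⟩ := hinv (m - f s) (by linarith)
      have := (hsy n).2.1
      linarith
    · rintro ⟨hs1, hs2⟩ n
      have hpos : (0:ℝ) < 1/((n:ℝ)+1) := by positivity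
      exact ⟨hs1, by rw [hs2]; linarith, le_of_eq hs2⟩
  have hIF : (⋂ n, F n) = (∅ : Set ℝ) := by
    ext s
    simp only [mem_iInter, hF, mem_setOf_eq, mem_empty_iff_false, iff_false]
    intro hsy
    obtain ⟨n, hn⟩ := hinv ((f s - m)) (by linarith [(hsy 0).2.1])
    have := (hsy n).2.2
    linarith
  have htE : Tendsto (fun n => volume (E n)) atTop (nhds 0) := by
    have := tendsto_measure_iInter_atTop (μ := volume)
      (fun n => (hmeasE n).nullMeasurableSet) hantE ⟨0, hfinite _ (fun s hs => hs.1)⟩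
    rw [hIE, hm0] at this
    exact this
  have htF : Tendsto (fun n => volume (F n)) atTop (nhds 0) := by
    have := tendsto_measure_iInter_atTop (μ := volume)
      (fun n => (hmeasF n).nullMeasurableSet) hantF ⟨0, hfinite _ (fun s hs => hs.1)⟩
    rw [hIF] at this
    simpa [Function.comp_def] using this
  have hc2 : (0:ENNReal) < ENNReal.ofReal (κ/2) := ENNReal.ofReal_pos.2 (by linarith)
  have hev := (htE.eventually_lt_const hc2).and (htF.eventually_lt_const hc2)
  obtain ⟨n, hn⟩ := hev.exists
  refine ⟨1/((n:ℝ)+1), by positivity, fun m₁ m₂ h1 h2 h3 h4 => ?_⟩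
  have hsub : {s : ℝ | s ∈ Icc 0 u0 ∧ m₁ < f s ∧ f s ≤ m₂} ⊆ E n ∪ F n := by
    intro s hs
    rcases le_or_gt (f s) m with hc | hc
    · exact Or.inl ⟨hs.1, by linarith [hs.2.1], hc⟩
    · exact Or.inr ⟨hs.1, hc, by linarith [hs.2.2]⟩
  have hbound : volume {s : ℝ | s ∈ Icc 0 u0 ∧ m₁ < f s ∧ f s ≤ m₂} ≤ ENNReal.ofReal κ := by
    refine le_trans (measure_mono hsub) (le_trans (measure_union_le _ _) ?_)
    have : ENNReal.ofReal κ = ENNReal.ofReal (κ/2) + ENNReal.ofReal (κ/2) := by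
      rw [← ENNReal.ofReal_add (by linarith) (by linarith)]
      norm_num
    rw [this]
    exact add_le_add hn.1.le hn.2.le
  calc (volume {s : ℝ | s ∈ Icc 0 u0 ∧ m₁ < f s ∧ f s ≤ m₂}).toReal
      ≤ (ENNReal.ofReal κ).toReal := ENNReal.toReal_mono ENNReal.ofReal_ne_top hbound
    _ = κ := ENNReal.toReal_ofReal hκ.le

/-- Main deterministic lemma: continuity of `m ↦ X^{-,m}` for a fixed continuous path. -/
theorem det_main (hf : Continuous f) {m T : ℝ}
    (hT : ∃ u : ℝ, 0 ≤ u ∧ T < occBelow f m u)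
    (hatom : ∀ v : ℝ, 0 ≤ v → volume {s : ℝ | s ∈ Icc 0 v ∧ f s = m} = 0)
    {ε : ℝ} (hε : 0 < ε) :
    ∃ η > 0, ∀ m' : ℝ, |m' - m| < η → ∀ t ∈ Icc (0:ℝ) T,
      |tcBelow f m' t - tcBelow f m t| ≤ ε := by
  obtain ⟨u0, hu0, hTocc⟩ := hT
  rcases lt_or_ge T 0 with hTneg | hT0
  · exact ⟨1, one_pos, fun m' _ t ht => absurd (ht.1.trans ht.2) (not_le.2 hTneg)⟩
  set γ : ℝ := min 1 ((occBelow f m u0 - T)/2) with hγdef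
  have hγ : 0 < γ := lt_min one_pos (by linarith)
  have hγ2 : T + 2*γ ≤ occBelow f m u0 := by
    have := min_le_right (1:ℝ) ((occBelow f m u0 - T)/2)
    linarith
  set S : ℝ := T + γ with hSdef
  have hS0 : 0 ≤ S := by linarith
  have hSlt : S < occBelow f m u0 := by linarith
  obtain ⟨κ₁, hκ₁, hgu⟩ := g_uniform hf hu0 hS0 hSlt (half_pos hε)
  set κb : ℝ := min κ₁ (γ/2) with hκbdef
  have hκb : 0 < κb := lt_min hκ₁ (by linarith)
  have hκbκ₁ : κb ≤ κ₁ := min_le_left _ _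
  have hκbγ : κb ≤ γ/2 := min_le_right _ _
  obtain ⟨η₀, hη₀, hkap⟩ := kappa_small hf (hatom u0 hu0) hκb
  refine ⟨min η₀ (ε/2), lt_min hη₀ (by linarith), fun m' hm' t ht => ?_⟩
  have hmη₀ : |m' - m| < η₀ := lt_of_lt_of_le hm' (min_le_left _ _)
  have hmε : |m' - m| < ε/2 := lt_of_lt_of_le hm' (min_le_right _ _)
  have habs := abs_lt.1 hmη₀
  have habsε := abs_lt.1 hmε
  have ht0 : 0 ≤ t := ht.1
  have htT : t ≤ T := ht.2
  have htm : t < occBelow f m u0 := lt_of_le_of_lt htT hTocc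
  rcases le_total m' m with hc | hc
  · -- case m' ≤ m
    have hK := hkap m' m (by linarith) hc le_rfl (by linarith)
    set K : ℝ := (volume {s : ℝ | s ∈ Icc 0 u0 ∧ m' < f s ∧ f s ≤ m}).toReal with hKdef
    have hK0 : 0 ≤ K := ENNReal.toReal_nonneg
    have hdiff := occ_diff_le hf hc hu0 (le_refl u0)
    have ht' : t < occBelow f m' u0 := by linarith
    set α' : ℝ := alphaT f m' t with hα'def
    have hα'0 : 0 ≤ α' := alpha_nonneg hu0 ht'
    have hα'u0 : α' ≤ u0 := alpha_le hu0 ht'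
    have hfα' : f α' ≤ m' := f_alpha_le hf hu0 ht0 ht'
    have hoccα' : occBelow f m' α' = t := occ_alpha hf hu0 ht0 ht'
    set β : ℝ := occBelow f m α' with hβdef
    have hβt : t ≤ β := by rw [← hoccα']; exact occ_mono_h α' hc
    have hβk : β ≤ t + κb := by
      have := occ_diff_le hf hc hα'0 hα'u0
      rw [hoccα'] at this
      linarith
    have hβlt : β < occBelow f m u0 := by linarith
    have hid : f (alphaT f m β) = f α' :=
      key_identity hf hα'0 (hfα'.trans hc) hu0 hβlt
    have hβmem : β ∈ Icc 0 S := ⟨by linarith, by linarith⟩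
    have htmem : t ∈ Icc 0 S := ⟨ht0, by linarith⟩
    have hbd := hgu β t hβmem htmem (by rw [abs_le]; constructor <;> linarith)
    rw [tcBelow_eq_alphaT, tcBelow_eq_alphaT, ← hα'def, ← hid]
    linarith [abs_nonneg (f (alphaT f m β) - f (alphaT f m t))]
  · -- case m ≤ m'
    have hK := hkap m m' (by linarith) le_rfl hc (by linarith)
    set K : ℝ := (volume {s : ℝ | s ∈ Icc 0 u0 ∧ m < f s ∧ f s ≤ m'}).toReal with hKdef
    have hK0 : 0 ≤ K := ENNReal.toReal_nonneg
    have ht'' : t < occBelow f m' u0 := lt_of_lt_of_le htm (occ_mono_h u0 hc)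
    set α : ℝ := alphaT f m t with hαdef
    set α' : ℝ := alphaT f m' t with hα'def
    have hα'α : α' ≤ α := alpha_anti_m hc hu0 htm
    have hα0 : 0 ≤ α := alpha_nonneg hu0 htm
    have hαu0 : α ≤ u0 := alpha_le hu0 htm
    have hα'0 : 0 ≤ α' := alpha_nonneg hu0 ht''
    have hα'u0 : α' ≤ u0 := le_trans hα'α hαu0
    have hoccα' : occBelow f m' α' = t := occ_alpha hf hu0 ht0 ht''
    set s' : ℝ := occBelow f m α' with hs'def
    have hs'le : s' ≤ t := by rw [← hoccα']; exact occ_mono_h α' hc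
    have hs'ge : t - κb ≤ s' := by
      have := occ_diff_le hf hc hα'0 hα'u0
      rw [hoccα'] at this
      linarith
    have hs'0 : 0 ≤ s' := occ_nonneg m α'
    have hs'lt : s' < occBelow f m u0 := by linarith
    have hs'mem : s' ∈ Icc 0 S := ⟨hs'0, by linarith⟩
    have htmem : t ∈ Icc 0 S := ⟨ht0, by linarith⟩
    have hbd := hgu s' t hs'mem htmem (by rw [abs_le]; constructor <;> linarith)
    rcases le_or_gt (f α') m with hfle | hfgt
    · have hid : f (alphaT f m s') = f α' := key_identity hf hα'0 hfle hu0 hs'lt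
      rw [tcBelow_eq_alphaT, tcBelow_eq_alphaT, ← hα'def, ← hαdef, ← hid]
      linarith [abs_nonneg (f (alphaT f m s') - f (alphaT f m t))]
    · have hfα'm' : f α' ≤ m' := f_alpha_le hf hu0 ht0 ht''
      have hgs' : f (alphaT f m s') = m := by
        set d : ℝ := alphaT f m s' with hddef
        have hfd : f d ≤ m := f_alpha_le hf hu0 hs'0 hs'lt
        have hoccd : occBelow f m d = s' := occ_alpha hf hu0 hs'0 hs'lt
        have hα'd : α' ≤ d := by
          refine le_csInf ⟨u0, hu0, hs'lt⟩ (fun v hv => ?_)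
          by_contra hvc
          push_neg at hvc
          have : occBelow f m v ≤ occBelow f m α' := occ_mono_u m hvc.le
          rw [← hs'def] at this
          exact absurd hv.2 (not_lt.2 this)
        have hne : α' ≠ d := by
          intro he
          rw [← he] at hfd
          linarith
        have hlt2 : α' < d := lt_of_le_of_ne hα'd hne
        have hend := endpoints_ge hf hα'0 hlt2 (by rw [hoccd, hs'def])
        exact le_antisymm hfd hend.2
      rw [tcBelow_eq_alphaT, tcBelow_eq_alphaT, ← hα'def, ← hαdef]
      have htr : |f α' - f α| ≤ |f α' - m| + |m - f α| := abs_sub_le _ _ _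
      have h1 : |f α' - m| = f α' - m := abs_of_nonneg (by linarith)
      have h2 : |m - f α| = |f (alphaT f m s') - f (alphaT f m t)| := by
        rw [hgs']
      rw [h1, h2] at htr
      have hfm' : f α' - m ≤ m' - m := by linarith
      linarith

end Alpha

end Det

namespace NoAtom

variable {P : Measure Ω} {B : ℝ → Ω → ℝ}

/-- Gaussian increment bound: the probability that an increment lies in a small
interval is controlled. -/
lemma prob_incr_le [IsProbabilityMeasure P] (hB : IsStdBM P B) {s t ε ρ : ℝ}
    (hs : 0 ≤ s) (hρ : 0 < ρ) (hρst : ρ ≤ t - s) (hε : 0 ≤ ε) :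
    P {ω | |B t ω - B s ω| ≤ ε} ≤ ENNReal.ofReal (2 * ε / Real.sqrt ρ) := by
  have hst : s ≤ t := by linarith
  have hmeas : Measurable fun ω => B t ω - B s ω := (hB.meas t).sub (hB.meas s)
  have hset : {ω | |B t ω - B s ω| ≤ ε} = (fun ω => B t ω - B s ω) ⁻¹' (Icc (-ε) ε) := by
    ext ω; simp [abs_le]
  rw [hset, ← Measure.map_apply hmeas measurableSet_Icc, hB.gauss_incr s t hs hst]
  have hv : Real.toNNReal (t - s) ≠ 0 := (Real.toNNReal_pos.2 (by linarith)).ne'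
  rw [gaussianReal_apply 0 hv]
  have hsqrt : 0 < Real.sqrt ρ := Real.sqrt_pos.2 hρ
  have hpdf_le : ∀ x : ℝ, gaussianPDF 0 (Real.toNNReal (t - s)) x
      ≤ ENNReal.ofReal ((Real.sqrt ρ)⁻¹) := by
    intro x
    rw [gaussianPDF]
    apply ENNReal.ofReal_le_ofReal
    unfold gaussianPDFReal
    have hvv : (0:ℝ) < (Real.toNNReal (t - s) : ℝ) := by
      rw [Real.coe_toNNReal _ (by linarith)]; linarith
    have h2πv : Real.sqrt ρ ≤ Real.sqrt (2 * Real.pi * (Real.toNNReal (t - s) : ℝ)) := by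
      apply Real.sqrt_le_sqrt
      rw [Real.coe_toNNReal _ (by linarith)]
      nlinarith [Real.pi_gt_three]
    have hexp : Real.exp (-(x - 0)^2 / (2 * (Real.toNNReal (t - s) : ℝ))) ≤ 1 := by
      rw [Real.exp_le_one_iff]
      apply div_nonpos_of_nonpos_of_nonneg
      · simp [sq_nonneg]
      · linarith
    calc (Real.sqrt (2 * Real.pi * (Real.toNNReal (t - s) : ℝ)))⁻¹
          * Real.exp (-(x - 0)^2 / (2 * (Real.toNNReal (t - s) : ℝ)))
        ≤ (Real.sqrt (2 * Real.pi * (Real.toNNReal (t - s) : ℝ)))⁻¹ * 1 := by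
          apply mul_le_mul_of_nonneg_left hexp (inv_nonneg.2 (Real.sqrt_nonneg _))
      _ = (Real.sqrt (2 * Real.pi * (Real.toNNReal (t - s) : ℝ)))⁻¹ := mul_one _
      _ ≤ (Real.sqrt ρ)⁻¹ := by
          apply inv_anti₀ hsqrt h2πv
  calc ∫⁻ x in Icc (-ε) ε, gaussianPDF 0 (Real.toNNReal (t - s)) x
      ≤ ∫⁻ _x in Icc (-ε) ε, ENNReal.ofReal ((Real.sqrt ρ)⁻¹) :=
        lintegral_mono (fun x => hpdf_le x)
    _ = ENNReal.ofReal ((Real.sqrt ρ)⁻¹) * volume (Icc (-ε) ε) := setLIntegral_const _ _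
    _ = ENNReal.ofReal ((Real.sqrt ρ)⁻¹) * ENNReal.ofReal (2 * ε) := by
        rw [Real.volume_Icc]
        congr 1
        ring_nf
    _ = ENNReal.ofReal (2 * ε / Real.sqrt ρ) := by
        rw [← ENNReal.ofReal_mul (inv_nonneg.2 (Real.sqrt_nonneg _))]
        congr 1
        field_simp

lemma bm_small [IsProbabilityMeasure P] (hB : IsStdBM P B) (n j : ℕ) :
    ∀ᵐ ω ∂P, ∀ a : ℝ,
      volume {t : ℝ | t ∈ Icc 0 (n:ℝ) ∧ B t ω = a} < ENNReal.ofReal (1/((j:ℝ)+1)) := by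
  set δ : ℝ := 1/((j:ℝ)+1) with hδdef
  have hδ : 0 < δ := by positivity
  set ρ : ℝ := δ^2/(4*((n:ℝ)+1)) with hρdef
  have hρ : 0 < ρ := by positivity
  have hjoint : Measurable (Function.uncurry B) :=
    measurable_uncurry_of_continuous_of_measurable hB.cont hB.meas
  set E : ℝ → Set (Ω × (ℝ × ℝ)) := fun ε =>
    {q | q.2.1 ∈ Icc (0:ℝ) (n:ℝ) ∧ q.2.2 ∈ Icc (0:ℝ) (n:ℝ) ∧ ρ ≤ |q.2.2 - q.2.1| ∧
      |B q.2.2 q.1 - B q.2.1 q.1| ≤ ε} with hEdef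
  have hmeas1 : Measurable fun q : Ω × (ℝ × ℝ) => B q.2.2 q.1 - B q.2.1 q.1 := by
    have h1 : Measurable fun q : Ω × (ℝ × ℝ) => B q.2.2 q.1 := by
      have : (fun q : Ω × (ℝ × ℝ) => B q.2.2 q.1)
          = (Function.uncurry B) ∘ (fun q : Ω × (ℝ × ℝ) => (q.2.2, q.1)) := rfl
      rw [this]
      exact hjoint.comp (measurable_snd.snd.prodMk measurable_fst)
    have h2 : Measurable fun q : Ω × (ℝ × ℝ) => B q.2.1 q.1 := by
      have : (fun q : Ω × (ℝ × ℝ) => B q.2.1 q.1)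
          = (Function.uncurry B) ∘ (fun q : Ω × (ℝ × ℝ) => (q.2.1, q.1)) := rfl
      rw [this]
      exact hjoint.comp (measurable_snd.fst.prodMk measurable_fst)
    exact h1.sub h2
  have hEmeas : ∀ ε : ℝ, MeasurableSet (E ε) := by
    intro ε
    refine MeasurableSet.inter ?_ (MeasurableSet.inter ?_ (MeasurableSet.inter ?_ ?_))
    · exact measurable_snd.fst measurableSet_Icc
    · exact measurable_snd.snd measurableSet_Icc
    · exact (measurable_snd.snd.sub measurable_snd.fst).abs measurableSet_Ici
    · exact hmeas1.abs measurableSet_Iic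
  set Z : ℝ → Ω → ENNReal := fun ε ω => (volume.prod volume) (Prod.mk ω ⁻¹' E ε) with hZdef
  have hZmeas : ∀ ε, Measurable (Z ε) := fun ε => measurable_measure_prodMk_left (hEmeas ε)
  have hint : ∀ ε : ℝ, 0 ≤ ε →
      ∫⁻ ω, Z ε ω ∂P ≤ ENNReal.ofReal (2 * ε / Real.sqrt ρ * ((n:ℝ)*(n:ℝ))) := by
    intro ε hε
    have h1 : ∫⁻ ω, Z ε ω ∂P = (P.prod (volume.prod volume)) (E ε) :=
      (Measure.prod_apply (hEmeas ε)).symm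
    rw [h1, Measure.prod_apply_symm (hEmeas ε)]
    have hbd : ∀ p : ℝ × ℝ, P ((fun ω => (ω, p)) ⁻¹' E ε)
        ≤ (Icc (0:ℝ) (n:ℝ) ×ˢ Icc (0:ℝ) (n:ℝ)).indicator
            (fun _ => ENNReal.ofReal (2 * ε / Real.sqrt ρ)) p := by
      intro p
      by_cases hp : p ∈ Icc (0:ℝ) (n:ℝ) ×ˢ Icc (0:ℝ) (n:ℝ)
      · rw [indicator_of_mem hp]
        by_cases hρp : ρ ≤ |p.2 - p.1|
        · rcases le_total p.1 p.2 with hc | hc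
          · have hsub : (fun ω => (ω, p)) ⁻¹' E ε ⊆ {ω | |B p.2 ω - B p.1 ω| ≤ ε} :=
              fun ω h => h.2.2.2
            refine le_trans (measure_mono hsub) (prob_incr_le hB hp.1.1 hρ ?_ hε)
            rwa [abs_of_nonneg (by linarith)] at hρp
          · have hsub : (fun ω => (ω, p)) ⁻¹' E ε ⊆ {ω | |B p.1 ω - B p.2 ω| ≤ ε} := by
              intro ω h
              have := h.2.2.2
              simp only [mem_setOf_eq]
              rw [abs_sub_comm]
              exact this
            refine le_trans (measure_mono hsub) (prob_incr_le hB hp.2.1 hρ ?_ hε)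
            rwa [abs_of_nonpos (by linarith), neg_sub] at hρp
        · have hempty : (fun ω => (ω, p)) ⁻¹' E ε = ∅ := by
            ext ω
            simp only [mem_preimage, mem_empty_iff_false, iff_false]
            intro h
            exact hρp h.2.2.1
          simp [hempty]
      · have hempty : (fun ω => (ω, p)) ⁻¹' E ε = ∅ := by
          ext ω
          simp only [mem_preimage, mem_empty_iff_false, iff_false]
          intro h
          exact hp ⟨h.1, h.2.1⟩
        simp [hempty]
    refine le_trans (lintegral_mono hbd) ?_
    rw [lintegral_indicator_const (measurableSet_Icc.prod measurableSet_Icc),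
      Measure.prod_prod, Real.volume_Icc]
    simp only [sub_zero]
    rw [← ENNReal.ofReal_mul (by exact Nat.cast_nonneg n),
      ← ENNReal.ofReal_mul (by positivity)]
  have geom : ∀ (ε : ℝ), 0 ≤ ε → ∀ ω : Ω, ∀ a : ℝ,
      ENNReal.ofReal δ ≤ volume {t : ℝ | t ∈ Icc 0 (n:ℝ) ∧ B t ω = a} →
      ENNReal.ofReal (δ^2/2) ≤ Z ε ω := by
    intro ε hε ω a hS
    set S := {t : ℝ | t ∈ Icc 0 (n:ℝ) ∧ B t ω = a} with hSdef
    set band := (Icc (0:ℝ) (n:ℝ) ×ˢ Icc (0:ℝ) (n:ℝ)) ∩ {p : ℝ × ℝ | |p.2 - p.1| < ρ}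
      with hbanddef
    have hbandmeas : MeasurableSet band :=
      (measurableSet_Icc.prod measurableSet_Icc).inter
        ((measurable_snd.sub measurable_fst).abs measurableSet_Iio)
    have hband : (volume.prod volume) band ≤ ENNReal.ofReal (2*ρ) * ENNReal.ofReal (n:ℝ) := by
      rw [Measure.prod_apply hbandmeas]
      have hsec : ∀ s : ℝ, volume (Prod.mk s ⁻¹' band)
          ≤ (Icc (0:ℝ) (n:ℝ)).indicator (fun _ => ENNReal.ofReal (2*ρ)) s := by
        intro s
        by_cases hs : s ∈ Icc (0:ℝ) (n:ℝ)
        · rw [indicator_of_mem hs]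
          have hsub : Prod.mk s ⁻¹' band ⊆ Ioo (s - ρ) (s + ρ) := by
            intro t htb
            have h2 := htb.2
            simp only [mem_setOf_eq] at h2
            have h3 := abs_lt.1 h2
            exact ⟨by linarith [h3.1], by linarith [h3.2]⟩
          refine le_trans (measure_mono hsub) ?_
          rw [Real.volume_Ioo]
          exact le_of_eq (by congr 1; ring)
        · have hempty : Prod.mk s ⁻¹' band = ∅ := by
            ext t
            simp only [mem_preimage, mem_empty_iff_false, iff_false]
            intro h
            exact hs h.1.1
          simp [hempty]
      refine le_trans (lintegral_mono hsec) ?_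
      rw [lintegral_indicator_const measurableSet_Icc, Real.volume_Icc]
      simp only [sub_zero]
      exact le_refl _
    have hSmeas : MeasurableSet S := by
      have : S = Icc 0 (n:ℝ) ∩ (fun t => B t ω) ⁻¹' {a} := rfl
      rw [this]
      exact measurableSet_Icc.inter ((hB.cont ω).measurable (measurableSet_singleton a))
    have hsub2 : S ×ˢ S ⊆ (Prod.mk ω ⁻¹' E ε) ∪ band := by
      rintro ⟨s, t⟩ ⟨hsS, htS⟩
      rcases le_or_gt ρ |t - s| with hc | hc
      · left
        refine ⟨hsS.1, htS.1, hc, ?_⟩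
        rw [hsS.2, htS.2]
        simpa using hε
      · right
        exact ⟨⟨hsS.1, htS.1⟩, hc⟩
    have hprod : ENNReal.ofReal δ * ENNReal.ofReal δ ≤ (volume.prod volume) (S ×ˢ S) := by
      rw [Measure.prod_prod]
      exact mul_le_mul' hS hS
    have hchain : ENNReal.ofReal δ * ENNReal.ofReal δ
        ≤ Z ε ω + (volume.prod volume) band :=
      le_trans hprod (le_trans (measure_mono hsub2) (measure_union_le _ _))
    have hband2 : (volume.prod volume) band ≤ ENNReal.ofReal (δ^2/2) := by
      refine le_trans hband ?_
      rw [← ENNReal.ofReal_mul (by positivity)]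
      apply ENNReal.ofReal_le_ofReal
      have hn1 : ((n:ℝ)+1) ≠ 0 := by positivity
      have heq : 2 * ρ * (n:ℝ) = δ^2 * (n:ℝ) / (2*((n:ℝ)+1)) := by
        rw [hρdef]; field_simp; ring
      rw [heq]
      have hn0 : (0:ℝ) ≤ (n:ℝ) := Nat.cast_nonneg n
      calc δ^2 * (n:ℝ) / (2*((n:ℝ)+1)) ≤ δ^2 * ((n:ℝ)+1) / (2*((n:ℝ)+1)) := by
            gcongr
            linarith
        _ = δ^2/2 := by
            rw [mul_comm 2 ((n:ℝ)+1), ← div_div, mul_div_assoc]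
            rw [div_self hn1, mul_one]
    have hδδ : ENNReal.ofReal δ * ENNReal.ofReal δ
        = ENNReal.ofReal (δ^2/2) + ENNReal.ofReal (δ^2/2) := by
      rw [← ENNReal.ofReal_mul hδ.le, ← ENNReal.ofReal_add (by positivity) (by positivity)]
      congr 1
      ring
    have hfinal : ENNReal.ofReal (δ^2/2) + ENNReal.ofReal (δ^2/2)
        ≤ Z ε ω + ENNReal.ofReal (δ^2/2) := by
      rw [← hδδ]
      exact le_trans hchain (add_le_add le_rfl hband2)
    exact (ENNReal.add_le_add_iff_right ENNReal.ofReal_ne_top).1 hfinal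
  set N : Set Ω := ⋂ k : ℕ, {ω | ENNReal.ofReal (δ^2/2) ≤ Z (1/((k:ℝ)+1)) ω} with hNdef
  have hc0 : (0:ENNReal) < ENNReal.ofReal (δ^2/2) := ENNReal.ofReal_pos.2 (by positivity)
  have hPN : ∀ k : ℕ, ENNReal.ofReal (δ^2/2) * P N
      ≤ ENNReal.ofReal (2 * (1/((k:ℝ)+1)) / Real.sqrt ρ * ((n:ℝ)*(n:ℝ))) := by
    intro k
    calc ENNReal.ofReal (δ^2/2) * P N
        ≤ ENNReal.ofReal (δ^2/2) * P {ω | ENNReal.ofReal (δ^2/2) ≤ Z (1/((k:ℝ)+1)) ω} := by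
          exact mul_le_mul_right (measure_mono (iInter_subset _ k)) _
      _ ≤ ∫⁻ ω, Z (1/((k:ℝ)+1)) ω ∂P :=
          mul_meas_ge_le_lintegral₀ (hZmeas _).aemeasurable _
      _ ≤ _ := hint _ (by positivity)
  have hzero : P N = 0 := by
    by_contra hne
    have hpos : 0 < ENNReal.ofReal (δ^2/2) * P N :=
      ENNReal.mul_pos hc0.ne' hne
    have hfin : ENNReal.ofReal (δ^2/2) * P N ≠ ⊤ :=
      ENNReal.mul_ne_top ENNReal.ofReal_ne_top (measure_ne_top P N)
    set C : ℝ := 2 / Real.sqrt ρ * ((n:ℝ)*(n:ℝ)) with hCdef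
    have hC0 : 0 ≤ C := by positivity
    have htR : 0 < (ENNReal.ofReal (δ^2/2) * P N).toReal := ENNReal.toReal_pos hpos.ne' hfin
    obtain ⟨k, hk⟩ := exists_nat_one_div_lt
      (div_pos htR (by positivity : (0:ℝ) < C + 1))
    have h2 := hPN k
    have h3 : 2 * (1/((k:ℝ)+1)) / Real.sqrt ρ * ((n:ℝ)*(n:ℝ)) = C * (1/((k:ℝ)+1)) := by
      rw [hCdef]; ring
    rw [h3] at h2
    have h5 : (C+1) * (1/((k:ℝ)+1)) < (ENNReal.ofReal (δ^2/2) * P N).toReal := by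
      have := (lt_div_iff₀ (by positivity : (0:ℝ) < C + 1)).1 hk
      linarith
    have h4 : C * (1/((k:ℝ)+1)) < (ENNReal.ofReal (δ^2/2) * P N).toReal := by
      have : C * (1/((k:ℝ)+1)) ≤ (C+1) * (1/((k:ℝ)+1)) := by
        apply mul_le_mul_of_nonneg_right (by linarith) (by positivity)
      linarith
    have h6 : ENNReal.ofReal (C * (1/((k:ℝ)+1))) < ENNReal.ofReal (δ^2/2) * P N := by
      rw [← ENNReal.ofReal_toReal hfin]
      exact (ENNReal.ofReal_lt_ofReal_iff htR).2 h4
    exact absurd h2 (not_le.2 h6)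
  have hae := measure_eq_zero_iff_ae_notMem.mp hzero
  filter_upwards [hae] with ω hω a
  by_contra hcon
  push_neg at hcon
  apply hω
  rw [hNdef, mem_iInter]
  intro k
  exact geom (1/((k:ℝ)+1)) (by positivity) ω a hcon

/-- Almost surely, the occupation measure of `B` has no atoms: simultaneously for
all levels `a`, the time spent at `a` is zero. -/
theorem bm_no_atoms [IsProbabilityMeasure P] (hB : IsStdBM P B) :
    ∀ᵐ ω ∂P, ∀ (a u : ℝ), 0 ≤ u → volume {t : ℝ | t ∈ Icc 0 u ∧ B t ω = a} = 0 := by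
  have hall : ∀ᵐ ω ∂P, ∀ (n j : ℕ), ∀ a : ℝ,
      volume {t : ℝ | t ∈ Icc 0 (n:ℝ) ∧ B t ω = a} < ENNReal.ofReal (1/((j:ℝ)+1)) :=
    ae_all_iff.2 (fun n => ae_all_iff.2 (fun j => bm_small hB n j))
  filter_upwards [hall] with ω hω a u hu
  have hsub : {t : ℝ | t ∈ Icc 0 u ∧ B t ω = a}
      ⊆ {t : ℝ | t ∈ Icc 0 ((⌈u⌉₊ : ℝ)) ∧ B t ω = a} := by
    intro t ht
    exact ⟨⟨ht.1.1, ht.1.2.trans (Nat.le_ceil u)⟩, ht.2⟩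
  have hub : ∀ j : ℕ, volume {t : ℝ | t ∈ Icc 0 u ∧ B t ω = a}
      < ENNReal.ofReal (1/((j:ℝ)+1)) :=
    fun j => lt_of_le_of_lt (measure_mono hsub) (hω ⌈u⌉₊ j a)
  by_contra hne
  have hfin : volume {t : ℝ | t ∈ Icc 0 u ∧ B t ω = a} ≠ ⊤ := by
    refine ne_top_of_le_ne_top ?_ (measure_mono (fun t ht => ht.1))
    simp [Real.volume_Icc]
  have hpos : 0 < (volume {t : ℝ | t ∈ Icc 0 u ∧ B t ω = a}).toReal :=
    ENNReal.toReal_pos hne hfin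
  obtain ⟨j, hj⟩ := exists_nat_one_div_lt hpos
  have := hub j
  rw [← ENNReal.ofReal_toReal hfin] at this
  have := (ENNReal.ofReal_lt_ofReal_iff (by positivity)).1 this
  linarith

end NoAtom

namespace Glue

/-- If `B` has no zero on `[q, t]`, the local-time approximation ratios for times `q`
and `t` eventually coincide, so the local time is constant there. -/
lemma LB_const {Bf LBf : ℝ → ℝ} (hBc : Continuous Bf)
    (happrox : ∀ t : ℝ, 0 ≤ t →
      Tendsto (fun ε : ℝ =>
          (volume {s : ℝ | s ∈ Icc 0 t ∧ Bf s ∈ Ioc 0 ε}).toReal / ε)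
        (nhdsWithin 0 (Ioi 0)) (nhds (LBf t)))
    {q t : ℝ} (hq : 0 ≤ q) (hqt : q ≤ t) (hnz : ∀ s ∈ Icc q t, Bf s ≠ 0) :
    LBf q = LBf t := by
  have hne : (Icc q t).Nonempty := ⟨q, le_rfl, hqt⟩
  obtain ⟨s₀, hs₀, hmin'⟩ := isCompact_Icc.exists_isMinOn hne
    (continuous_abs.comp hBc).continuousOn
  have hmin : ∀ s ∈ Icc q t, |Bf s₀| ≤ |Bf s| := fun s hs => hmin' hs
  have hδ0 : 0 < |Bf s₀| := abs_pos.2 (hnz s₀ hs₀)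
  have hev : ∀ᶠ ε in nhdsWithin (0:ℝ) (Ioi 0),
      (volume {s : ℝ | s ∈ Icc 0 q ∧ Bf s ∈ Ioc 0 ε}).toReal / ε
        = (volume {s : ℝ | s ∈ Icc 0 t ∧ Bf s ∈ Ioc 0 ε}).toReal / ε := by
    filter_upwards [Ioo_mem_nhdsGT_of_mem (⟨le_rfl, hδ0⟩ : (0:ℝ) ∈ Ico 0 |Bf s₀|)]
      with ε hε
    have hset : {s : ℝ | s ∈ Icc 0 t ∧ Bf s ∈ Ioc 0 ε}
        = {s : ℝ | s ∈ Icc 0 q ∧ Bf s ∈ Ioc 0 ε} := by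
      ext s
      simp only [mem_setOf_eq, mem_Icc, mem_Ioc]
      constructor
      · rintro ⟨⟨hs0, hst⟩, hin⟩
        refine ⟨⟨hs0, ?_⟩, hin⟩
        by_contra hcon
        push_neg at hcon
        have hsmem : s ∈ Icc q t := ⟨hcon.le, hst⟩
        have h1 : |Bf s₀| ≤ |Bf s| := hmin s hsmem
        have h2 : |Bf s| = Bf s := abs_of_pos hin.1
        have := hε.2
        linarith [hin.2]
      · rintro ⟨⟨hs0, hsq⟩, hin⟩
        exact ⟨⟨hs0, hsq.trans hqt⟩, hin⟩
    rw [hset]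
  exact tendsto_nhds_unique ((happrox q hq).congr' hev) (happrox t (hq.trans hqt))

/-- Covering argument: atomlessness of the occupation measure of `X = |B| + c·LB`
at all levels, given atomlessness for `B` and local constancy of `LB`. -/
lemma X_no_atoms {Bf LBf : ℝ → ℝ} {c : ℝ} (hBc : Continuous Bf) (hB0 : Bf 0 = 0)
    (hzero : ∀ (a u : ℝ), 0 ≤ u → volume {s : ℝ | s ∈ Icc 0 u ∧ Bf s = a} = 0)
    (hconst : ∀ q t : ℝ, 0 ≤ q → q ≤ t → (∀ s ∈ Icc q t, Bf s ≠ 0) → LBf q = LBf t)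
    (m : ℝ) (u0 : ℝ) (hu0 : 0 ≤ u0) :
    volume {s : ℝ | s ∈ Icc 0 u0 ∧ |Bf s| + c * LBf s = m} = 0 := by
  have hsub : {s : ℝ | s ∈ Icc 0 u0 ∧ |Bf s| + c * LBf s = m}
      ⊆ {s : ℝ | s ∈ Icc 0 u0 ∧ Bf s = 0}
        ∪ ⋃ q : ℚ, ({s : ℝ | s ∈ Icc 0 u0 ∧ Bf s = m - c * LBf (q:ℝ)}
          ∪ {s : ℝ | s ∈ Icc 0 u0 ∧ Bf s = -(m - c * LBf (q:ℝ))}) := by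
    rintro s ⟨hsmem, hsX⟩
    by_cases hBz : Bf s = 0
    · exact Or.inl ⟨hsmem, hBz⟩
    · right
      have hspos : 0 < s := by
        rcases eq_or_lt_of_le hsmem.1 with h0 | h0
        · exact absurd (h0 ▸ hB0) hBz
        · exact h0
      obtain ⟨θ, hθ, hθp⟩ := Metric.continuousAt_iff.mp hBc.continuousAt |Bf s|
        (abs_pos.2 hBz)
      have hmax : max 0 (s - θ) < s := max_lt hspos (by linarith)
      obtain ⟨q, hq1, hq2⟩ := exists_rat_btwn hmax
      have hq0 : (0:ℝ) ≤ (q:ℝ) := le_trans (le_max_left _ _) hq1.le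
      have hnz : ∀ w ∈ Icc (q:ℝ) s, Bf w ≠ 0 := by
        intro w hw
        have hd : dist w s < θ := by
          rw [Real.dist_eq, abs_lt]
          constructor
          · have : s - θ ≤ max 0 (s - θ) := le_max_right _ _
            have := hw.1
            linarith
          · linarith [hw.2]
        have := hθp (x := w) hd
        rw [Real.dist_eq] at this
        intro hcon
        rw [hcon] at this
        simp at this
      have hLB : LBf (q:ℝ) = LBf s := hconst (q:ℝ) s hq0 hq2.le hnz
      have habs : |Bf s| = m - c * LBf (q:ℝ) := by
        rw [hLB]; linarith
      rcases abs_cases (Bf s) with ⟨h1, _⟩ | ⟨h1, _⟩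
      · exact mem_iUnion.2 ⟨q, Or.inl ⟨hsmem, by rw [← h1, habs]⟩⟩
      · refine mem_iUnion.2 ⟨q, Or.inr ⟨hsmem, ?_⟩⟩
        rw [← habs, h1, neg_neg]
  refine measure_mono_null hsub ?_
  refine measure_union_null (hzero 0 u0 hu0) ?_
  refine measure_iUnion_null (fun q => ?_)
  exact measure_union_null (hzero _ u0 hu0) (hzero _ u0 hu0)

end Glue

end PRBM

/-- Fix `δ>0`. Under `P^{(-δ)}`, almost surely the map `m ↦ X^{-,m}`
is continuous for locally uniform convergence on its domain: for every `m>0`, every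
`T < A_∞^{-,m}` and every `ε>0` there is `η>0` such that `|m'-m| < η` implies
`sup_{0≤t≤T} |X^{-,m'}_t - X^{-,m}_t| ≤ ε`. (Here `T < A_∞^{-,m}` is expressed as
`∃ u ≥ 0, T < A^{-,m}_u`.) -/
theorem stmt17
    {Ω : Type} [MeasurableSpace Ω] (P : Measure Ω) [IsProbabilityMeasure P]
    (δ : ℝ) (hδ : 0 < δ)
    (B LB X : ℝ → Ω → ℝ)
    (hB : IsStdBM P B) (hLB : IsLocTime0 P B LB)
    (hX : ∀ t ω, X t ω = |B t ω| + (2 / δ) * LB t ω) :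
    ∀ᵐ ω ∂P, ∀ m : ℝ, 0 < m → ∀ T : ℝ,
      (∃ u : ℝ, 0 ≤ u ∧ T < occBelow (fun s => X s ω) m u) →
      ∀ ε : ℝ, 0 < ε → ∃ η : ℝ, 0 < η ∧ ∀ m' : ℝ, |m' - m| < η →
        ∀ t ∈ Icc (0 : ℝ) T,
          |tcBelow (fun s => X s ω) m' t - tcBelow (fun s => X s ω) m t| ≤ ε := by
  filter_upwards [hLB.approx, PRBM.NoAtom.bm_no_atoms hB] with ω happrox hatoms
  intro m _hm T hT ε hε
  have hfeq : (fun s => X s ω) = fun s => |B s ω| + (2/δ) * LB s ω :=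
    funext (fun s => hX s ω)
  have hf : Continuous fun s => X s ω := by
    rw [hfeq]
    exact (continuous_abs.comp (hB.cont ω)).add (continuous_const.mul (hLB.cont ω))
  have hconst : ∀ q t : ℝ, 0 ≤ q → q ≤ t → (∀ s ∈ Icc q t, B s ω ≠ 0) →
      LB q ω = LB t ω := fun q t hq hqt hnz =>
    PRBM.Glue.LB_const (Bf := fun s => B s ω) (LBf := fun s => LB s ω)
      (hB.cont ω) happrox hq hqt hnz
  have hatom : ∀ v : ℝ, 0 ≤ v →
      volume {s : ℝ | s ∈ Icc 0 v ∧ (fun s => X s ω) s = m} = 0 := by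
    intro v hv
    have h1 := PRBM.Glue.X_no_atoms (Bf := fun s => B s ω) (LBf := fun s => LB s ω)
      (c := 2/δ) (hB.cont ω) (hB.init ω) (fun a u hu => hatoms a u hu) hconst m v hv
    have hseteq : {s : ℝ | s ∈ Icc 0 v ∧ (fun s => X s ω) s = m}
        = {s : ℝ | s ∈ Icc 0 v ∧ |B s ω| + 2/δ * LB s ω = m} := by
      ext s
      simp only [mem_setOf_eq, hX]
    rw [hseteq]
    exact h1
  exact PRBM.Det.det_main hf hT hatom hε
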